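/- Let T : ℝ^n → ℝ^n be a Shapley operator, let q ≥ 1 and 0 < γ < 1 be such that T^q is a γ-contraction in the Hilbert seminorm, let η ≥ 0, and let T̃ : ℝ^n → ℝ^n satisfy ‖T̃(x) − T(x)‖_∞ ≤ η for all x. Define R(x) = x − t(x)·e and x̃_k = (R∘T̃)^k(0). Then for every integer k ≥ 0, ‖x̃_{qk} − T̃(x̃_{qk})‖_H ≤ η(2 + 4q/(1 − γ)) + γ^k ‖T(0)‖_H. -/

import Mathlib

noncomputable def hilbertSeminorm {n : ℕ} (x : Fin n → ℝ) : ℝ :=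
  (⨆ i, x i) - (⨅ i, x i)

section Aux
variable {n : ℕ} [Nonempty (Fin n)]

lemma hsAux_le_sup (f : Fin n → ℝ) (i : Fin n) : f i ≤ ⨆ j, f j :=
  le_ciSup (Set.Finite.bddAbove (Set.finite_range f)) i

lemma hsAux_inf_le (f : Fin n → ℝ) (i : Fin n) : (⨅ j, f j) ≤ f i :=
  ciInf_le (Set.Finite.bddBelow (Set.finite_range f)) i

lemma hs_le {f : Fin n → ℝ} {a b : ℝ} (h1 : ∀ i, f i ≤ a) (h2 : ∀ i, b ≤ f i) :
    hilbertSeminorm f ≤ a - b := by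
  have ha : (⨆ i, f i) ≤ a := ciSup_le h1
  have hb : b ≤ ⨅ i, f i := le_ciInf h2
  unfold hilbertSeminorm; linarith

lemma hs_nonneg (f : Fin n → ℝ) : 0 ≤ hilbertSeminorm f := by
  obtain ⟨i⟩ := ‹Nonempty (Fin n)›
  have h1 := hsAux_le_sup f i
  have h2 := hsAux_inf_le f i
  unfold hilbertSeminorm; linarith

lemma hs_zero : hilbertSeminorm (0 : Fin n → ℝ) = 0 := by
  unfold hilbertSeminorm
  simp

lemma hs_add (f g : Fin n → ℝ) :
    hilbertSeminorm (f + g) ≤ hilbertSeminorm f + hilbertSeminorm g := by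
  have h1 : ∀ i, (f + g) i ≤ (⨆ i, f i) + ⨆ i, g i := by
    intro i; have := hsAux_le_sup f i; have := hsAux_le_sup g i
    simp only [Pi.add_apply]; linarith
  have h2 : ∀ i, ((⨅ i, f i) + ⨅ i, g i) ≤ (f + g) i := by
    intro i; have := hsAux_inf_le f i; have := hsAux_inf_le g i
    simp only [Pi.add_apply]; linarith
  have := hs_le h1 h2
  unfold hilbertSeminorm at this ⊢; linarith

lemma hs_triangle (x y z : Fin n → ℝ) :
    hilbertSeminorm (x - z) ≤ hilbertSeminorm (x - y) + hilbertSeminorm (y - z) := by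
  have h := hs_add (x - y) (y - z)
  have e : (x - y) + (y - z) = x - z := by abel
  rwa [e] at h

lemma hs_add_const (f : Fin n → ℝ) (c : ℝ) :
    hilbertSeminorm (fun i => f i + c) = hilbertSeminorm f := by
  have key : ∀ (g : Fin n → ℝ) (d : ℝ),
      hilbertSeminorm (fun i => g i + d) ≤ hilbertSeminorm g := by
    intro g d
    have h := hs_le (f := fun i => g i + d) (a := (⨆ i, g i) + d) (b := (⨅ i, g i) + d)
      (fun i => by have := hsAux_le_sup g i; simpa using by linarith)
      (fun i => by have := hsAux_inf_le g i; simpa using by linarith)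
    unfold hilbertSeminorm at h ⊢; linarith
  refine le_antisymm (key f c) ?_
  have h := key (fun i => f i + c) (-c)
  simpa using h

lemma hs_neg (f : Fin n → ℝ) : hilbertSeminorm (-f) = hilbertSeminorm f := by
  have key : ∀ g : Fin n → ℝ, hilbertSeminorm (-g) ≤ hilbertSeminorm g := by
    intro g
    have h := hs_le (f := -g) (a := -(⨅ i, g i)) (b := -(⨆ i, g i))
      (fun i => by have := hsAux_inf_le g i; simp only [Pi.neg_apply]; linarith)
      (fun i => by have := hsAux_le_sup g i; simp only [Pi.neg_apply]; linarith)
    unfold hilbertSeminorm at h ⊢; linarith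
  refine le_antisymm (key f) ?_
  have h := key (-f)
  simpa using h

lemma hs_sub_comm (f g : Fin n → ℝ) :
    hilbertSeminorm (f - g) = hilbertSeminorm (g - f) := by
  rw [← hs_neg (g - f), neg_sub]

lemma hs_le_two_norm (f : Fin n → ℝ) : hilbertSeminorm f ≤ 2 * ‖f‖ := by
  have h1 : ∀ i, f i ≤ ‖f‖ := fun i => by
    have := norm_le_pi_norm f i
    rw [Real.norm_eq_abs] at this
    exact (abs_le.mp this).2
  have h2 : ∀ i, -‖f‖ ≤ f i := fun i => by
    have := norm_le_pi_norm f i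
    rw [Real.norm_eq_abs] at this
    exact (abs_le.mp this).1
  have := hs_le h1 h2
  linarith

lemma hs_nonexpansive {T : (Fin n → ℝ) → (Fin n → ℝ)} (hmono : Monotone T)
    (hhom : ∀ (x : Fin n → ℝ) (c : ℝ), T (fun i => x i + c) = fun i => T x i + c)
    (x y : Fin n → ℝ) :
    hilbertSeminorm (T x - T y) ≤ hilbertSeminorm (x - y) := by
  set t := ⨆ i, (x - y) i with ht
  set b := ⨅ i, (x - y) i with hb
  have hxy : x ≤ fun i => y i + t := by
    intro i
    have h := hsAux_le_sup (x - y) i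
    rw [← ht] at h
    simp only [Pi.sub_apply] at h
    show x i ≤ y i + t
    linarith
  have h1 := hmono hxy
  rw [hhom y t] at h1
  have hyx : y ≤ fun i => x i + (-b) := by
    intro i
    have h := hsAux_inf_le (x - y) i
    rw [← hb] at h
    simp only [Pi.sub_apply] at h
    show y i ≤ x i + (-b)
    linarith
  have h2 := hmono hyx
  rw [hhom x (-b)] at h2
  have key := hs_le (f := T x - T y) (a := t) (b := b)
    (fun i => by
      have h : T x i ≤ T y i + t := h1 i
      simp only [Pi.sub_apply]; linarith)
    (fun i => by
      have h : T y i ≤ T x i + (-b) := h2 i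
      simp only [Pi.sub_apply]; linarith)
  unfold hilbertSeminorm
  rw [← ht, ← hb]
  exact key

end Aux

/-- Residual bound for approximate relative value iteration: if `T^q` is a
`γ`-contraction in Hilbert's seminorm and `T̃` approximates `T` up to `η` in
the sup-norm, then the approximate iterates `x̃_k = (R∘T̃)^k(0)` satisfy
`‖x̃_{qk} - T̃(x̃_{qk})‖_H ≤ η(2 + 4q/(1-γ)) + γ^k ‖T(0)‖_H`. -/
theorem approximate_residual_bound {n : ℕ} (hn : 0 < n)
    (T : (Fin n → ℝ) → (Fin n → ℝ))
    (hmono : Monotone T)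
    (hhom : ∀ (x : Fin n → ℝ) (c : ℝ), T (fun i => x i + c) = fun i => T x i + c)
    (q : ℕ) (hq : 1 ≤ q) (γ : ℝ) (hγ0 : 0 < γ) (hγ1 : γ < 1)
    (hcontr : ∀ x y : Fin n → ℝ,
      hilbertSeminorm (T^[q] x - T^[q] y) ≤ γ * hilbertSeminorm (x - y))
    (η : ℝ) (hη : 0 ≤ η)
    (Ttil : (Fin n → ℝ) → (Fin n → ℝ))
    (hTtil : ∀ x : Fin n → ℝ, ‖Ttil x - T x‖ ≤ η)
    (R : (Fin n → ℝ) → (Fin n → ℝ))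
    (hR : R = fun x => fun i => x i - ⨆ j, x j) :
    ∀ k : ℕ,
      hilbertSeminorm ((R ∘ Ttil)^[q * k] 0 - Ttil ((R ∘ Ttil)^[q * k] 0)) ≤
        η * (2 + 4 * q / (1 - γ)) + γ ^ k * hilbertSeminorm (T 0) := by
  haveI : Nonempty (Fin n) := Fin.pos_iff_nonempty.mp hn
  set S : (Fin n → ℝ) → (Fin n → ℝ) := R ∘ Ttil with hSdef
  have hγ' : (0:ℝ) < 1 - γ := by linarith
  -- S u = Ttil u shifted by a constant
  have hSu : ∀ u w : Fin n → ℝ, hilbertSeminorm (S u - w) = hilbertSeminorm (Ttil u - w) := by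
    intro u w
    have e : S u - w = fun i => (Ttil u - w) i + (-(⨆ j, Ttil u j)) := by
      funext i
      simp [hSdef, hR, Pi.sub_apply]
      ring
    rw [e, hs_add_const]
  have hSu' : ∀ u w : Fin n → ℝ, hilbertSeminorm (w - S u) = hilbertSeminorm (w - Ttil u) := by
    intro u w
    rw [hs_sub_comm, hSu, hs_sub_comm]
  have hErr : ∀ x, hilbertSeminorm (Ttil x - T x) ≤ 2 * η := by
    intro x
    calc hilbertSeminorm (Ttil x - T x) ≤ 2 * ‖Ttil x - T x‖ := hs_le_two_norm _
      _ ≤ 2 * η := by linarith [hTtil x]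
  have hTnon := hs_nonexpansive hmono hhom
  -- Step A: error accumulation
  have stepA : ∀ (j : ℕ) (x : Fin n → ℝ),
      hilbertSeminorm (S^[j] x - T^[j] x) ≤ 2 * j * η := by
    intro j
    induction j with
    | zero => intro x; simp [hs_zero]
    | succ j ih =>
      intro x
      rw [Function.iterate_succ_apply', Function.iterate_succ_apply']
      set u := S^[j] x
      set v := T^[j] x
      calc hilbertSeminorm (S u - T v) = hilbertSeminorm (Ttil u - T v) := hSu u (T v)
        _ ≤ hilbertSeminorm (Ttil u - T u) + hilbertSeminorm (T u - T v) :=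
            hs_triangle _ _ _
        _ ≤ 2 * η + hilbertSeminorm (u - v) := add_le_add (hErr u) (hTnon u v)
        _ ≤ 2 * η + 2 * j * η := by linarith [ih x]
        _ = 2 * (j + 1 : ℕ) * η := by push_cast; ring
  -- Step B: S^q is a γ-contraction up to 4qη
  have stepB : ∀ x y : Fin n → ℝ,
      hilbertSeminorm (S^[q] x - S^[q] y) ≤
        γ * hilbertSeminorm (x - y) + 4 * q * η := by
    intro x y
    calc hilbertSeminorm (S^[q] x - S^[q] y)
        ≤ hilbertSeminorm (S^[q] x - T^[q] x) + hilbertSeminorm (T^[q] x - S^[q] y) :=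
          hs_triangle _ _ _
      _ ≤ hilbertSeminorm (S^[q] x - T^[q] x) +
          (hilbertSeminorm (T^[q] x - T^[q] y) + hilbertSeminorm (T^[q] y - S^[q] y)) := by
          linarith [hs_triangle (T^[q] x) (T^[q] y) (S^[q] y)]
      _ ≤ 2 * q * η + (γ * hilbertSeminorm (x - y) + 2 * q * η) := by
          have h3 : hilbertSeminorm (T^[q] y - S^[q] y) ≤ 2 * q * η := by
            rw [hs_sub_comm]; exact stepA q y
          linarith [stepA q x, hcontr x y]
      _ = γ * hilbertSeminorm (x - y) + 4 * q * η := by ring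
  -- Step C: iterated contraction with error
  have stepC : ∀ (k : ℕ) (u v : Fin n → ℝ),
      hilbertSeminorm (S^[q * k] u - S^[q * k] v) ≤
        γ ^ k * hilbertSeminorm (u - v) + 4 * q * η / (1 - γ) := by
    intro k
    induction k with
    | zero =>
      intro u v
      have : (0:ℝ) ≤ 4 * q * η / (1 - γ) := by positivity
      simp only [Nat.mul_zero, Function.iterate_zero, id_eq, pow_zero, one_mul]
      linarith
    | succ k ih =>
      intro u v
      have e : q * (k + 1) = q + q * k := by ring
      rw [e, Function.iterate_add_apply, Function.iterate_add_apply]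
      have h1 := stepB (S^[q * k] u) (S^[q * k] v)
      have h2 := ih u v
      have h3 := mul_le_mul_of_nonneg_left h2 hγ0.le
      have h4 : γ * (4 * q * η / (1 - γ)) + 4 * q * η = 4 * q * η / (1 - γ) := by
        field_simp
        ring
      calc hilbertSeminorm (S^[q] (S^[q * k] u) - S^[q] (S^[q * k] v))
          ≤ γ * hilbertSeminorm (S^[q * k] u - S^[q * k] v) + 4 * q * η := h1
        _ ≤ γ * (γ ^ k * hilbertSeminorm (u - v) + 4 * q * η / (1 - γ)) + 4 * q * η := by
            linarith [h3]
        _ = γ ^ (k + 1) * hilbertSeminorm (u - v) + (γ * (4 * q * η / (1 - γ)) + 4 * q * η) := by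
            ring
        _ = γ ^ (k + 1) * hilbertSeminorm (u - v) + 4 * q * η / (1 - γ) := by rw [h4]
  -- Final assembly
  intro k
  set y := S^[q * k] (0 : Fin n → ℝ) with hy
  have e1 : hilbertSeminorm (y - Ttil y) = hilbertSeminorm (y - S y) := (hSu' y y).symm
  have e2 : S y = S^[q * k] (S 0) := by
    rw [hy, ← Function.iterate_succ_apply' S (q * k) 0, Function.iterate_succ_apply]
  have h3 := stepC k 0 (S 0)
  have h4 : hilbertSeminorm ((0 : Fin n → ℝ) - S 0) ≤ hilbertSeminorm (T 0) + 2 * η := by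
    rw [hSu' 0 0]
    have e : (0 : Fin n → ℝ) - Ttil 0 = -(Ttil 0) := by simp
    rw [e, hs_neg]
    have e' : Ttil 0 = (Ttil 0 - T 0) + T 0 := by abel
    calc hilbertSeminorm (Ttil 0)
        = hilbertSeminorm ((Ttil 0 - T 0) + T 0) := by rw [← e']
      _ ≤ hilbertSeminorm (Ttil 0 - T 0) + hilbertSeminorm (T 0) := hs_add _ _
      _ ≤ 2 * η + hilbertSeminorm (T 0) := by linarith [hErr 0]
      _ = hilbertSeminorm (T 0) + 2 * η := by ring
  have hpow1 : γ ^ k ≤ 1 := pow_le_one₀ hγ0.le hγ1.le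
  have hpow0 : (0:ℝ) ≤ γ ^ k := by positivity
  have hH0 : 0 ≤ hilbertSeminorm (T 0) := hs_nonneg _
  have key : hilbertSeminorm (y - S y) ≤ γ ^ k * hilbertSeminorm ((0:Fin n → ℝ) - S 0)
      + 4 * q * η / (1 - γ) := by rw [e2]; exact h3
  have hdiv : η * (4 * q / (1 - γ)) = 4 * q * η / (1 - γ) := by
    field_simp
  rw [show (R ∘ Ttil)^[q * k] (0:Fin n → ℝ) = y from rfl] at *
  rw [e1]
  have := mul_le_mul_of_nonneg_left h4 hpow0
  nlinarith [key, this]
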